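/- Gradient identity for the two-temperature loss: let 0 < t₁ < 2 and 0 < t₂ < 2. Then for every real u with 1 + (1-t₂)u > 0 (any u when t₂ = 1), the function u ↦ -log_{t₁}(exp_{t₂}(u)) is differentiable at u with derivative -(exp_{t₂}(u))^{t₂ - t₁}. In particular, when t₂ > t₁ the gradient of the loss of an observation carries the importance factor p^{t₂ - t₁} where p = exp_{t₂}(u) is its predictive probability. -/

import Mathlib

/-- The tempered logarithm `log_t`: for `t ≠ 1` it is `(x^(1-t) - 1)/(1-t)`;
for `t = 1` it is the natural logarithm. -/
noncomputable def tlog (t x : ℝ) : ℝ :=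
  if t = 1 then Real.log x else (x ^ (1 - t) - 1) / (1 - t)

/-- The tempered exponential `exp_t`: for `t ≠ 1` it is
`(max 0 (1 + (1-t)u))^(1/(1-t))`; for `t = 1` it is the standard exponential. -/
noncomputable def texp (t u : ℝ) : ℝ :=
  if t = 1 then Real.exp u else (max 0 (1 + (1 - t) * u)) ^ (1 / (1 - t))

lemma texp_pos {t u : ℝ} (hu : 0 < 1 + (1 - t) * u) : 0 < texp t u := by
  unfold texp
  split
  · exact Real.exp_pos u
  · exact Real.rpow_pos_of_pos (lt_max_of_lt_right hu) _

lemma texp_hasDerivAt {t : ℝ} (u : ℝ) (hu : 0 < 1 + (1 - t) * u) :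
    HasDerivAt (texp t) ((texp t u) ^ t) u := by
  rcases eq_or_ne t 1 with h1 | h1
  · subst h1
    have he : texp 1 = Real.exp := funext fun v => by simp [texp]
    rw [he]
    simpa [Real.rpow_one] using Real.hasDerivAt_exp u
  · have hne : (1 : ℝ) - t ≠ 0 := sub_ne_zero.mpr (Ne.symm h1)
    have hlin : HasDerivAt (fun v : ℝ => 1 + (1 - t) * v) (1 - t) u := by
      simpa using ((hasDerivAt_id u).const_mul (1 - t)).const_add 1
    have hpow : HasDerivAt (fun y : ℝ => y ^ (1 / (1 - t)))
        ((1 / (1 - t)) * (1 + (1 - t) * u) ^ (1 / (1 - t) - 1)) (1 + (1 - t) * u) :=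
      Real.hasDerivAt_rpow_const (Or.inl hu.ne')
    have hcomp := hpow.comp u hlin
    have heq : (fun v : ℝ => texp t v) =ᶠ[nhds u]
        (fun v : ℝ => (1 + (1 - t) * v) ^ (1 / (1 - t))) := by
      have hc : Continuous fun v : ℝ => 1 + (1 - t) * v := by continuity
      have hev : ∀ᶠ v in nhds u, 0 < 1 + (1 - t) * v :=
        (hc.tendsto u).eventually (eventually_gt_nhds hu)
      filter_upwards [hev] with v hv
      simp [texp, h1, max_eq_right hv.le]
    have hb : (0:ℝ) < 1 + (1 - t) * u := hu
    have hval : (1 / (1 - t)) * (1 + (1 - t) * u) ^ (1 / (1 - t) - 1) * (1 - t)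
        = (texp t u) ^ t := by
      have hT : texp t u = (1 + (1 - t) * u) ^ (1 / (1 - t)) := by
        simp [texp, h1, max_eq_right hb.le]
      rw [hT, ← Real.rpow_mul hb.le,
        show (1:ℝ) / (1 - t) * t = 1 / (1 - t) - 1 from by field_simp; ring]
      field_simp
    rw [← hval]
    exact hcomp.congr_of_eventuallyEq heq

lemma tlog_hasDerivAt {t : ℝ} {x : ℝ} (hx : 0 < x) :
    HasDerivAt (tlog t) (x ^ (-t)) x := by
  rcases eq_or_ne t 1 with h1 | h1
  · subst h1
    have he : tlog 1 = Real.log := funext fun y => by simp [tlog]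
    rw [he]
    simpa [Real.rpow_neg_one] using Real.hasDerivAt_log hx.ne'
  · have hne : (1 : ℝ) - t ≠ 0 := sub_ne_zero.mpr (Ne.symm h1)
    have hpow : HasDerivAt (fun y : ℝ => y ^ (1 - t))
        ((1 - t) * x ^ (1 - t - 1)) x :=
      Real.hasDerivAt_rpow_const (Or.inl hx.ne')
    have hd := (hpow.sub_const 1).div_const (1 - t)
    have heq : tlog t = (fun y : ℝ => (y ^ (1 - t) - 1) / (1 - t)) :=
      funext fun y => by simp [tlog, h1]
    rw [heq]
    refine hd.congr_deriv ?_
    rw [show (1:ℝ) - t - 1 = -t by ring]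
    field_simp

/-- Gradient identity for the two-temperature loss: for `0 < t₁ < 2`,
`0 < t₂ < 2`, and any `u` with `1 + (1-t₂)u > 0` (which holds for every `u`
when `t₂ = 1`), the map `u ↦ -log_{t₁}(exp_{t₂} u)` is differentiable at `u`
with derivative `-(exp_{t₂} u)^(t₂ - t₁)`. -/
theorem loss_hasDerivAt (t₁ t₂ : ℝ) (ht₁0 : 0 < t₁) (ht₁2 : t₁ < 2)
    (ht₂0 : 0 < t₂) (ht₂2 : t₂ < 2) (u : ℝ) (hu : 0 < 1 + (1 - t₂) * u) :
    HasDerivAt (fun v : ℝ => -tlog t₁ (texp t₂ v))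
      (-(texp t₂ u) ^ (t₂ - t₁)) u := by
  have hp : 0 < texp t₂ u := texp_pos hu
  have h1 := ((tlog_hasDerivAt (t := t₁) hp).comp u (texp_hasDerivAt u hu)).neg
  have hval : (texp t₂ u) ^ (t₂ - t₁)
      = (texp t₂ u) ^ (-t₁) * (texp t₂ u) ^ t₂ := by
    rw [← Real.rpow_add hp]; ring_nf
  rw [hval]
  exact h1
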